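/- In an undirected graph G with source s and sink t in which every edge lies on some s-t path, every tracking set T is a feedback vertex set of G. -/

import Mathlib

open SimpleGraph

noncomputable def trackSeq {V : Type} (T : Set V) (l : List V) : List V :=
  l.filter (fun v => @decide (v ∈ T) (Classical.propDecidable _))

/-- `T` is a tracking set for `s`-`t` paths in `G`: distinct `s`-`t` paths have
distinct sequences of `T`-vertices along them. -/
def IsTrackingSet {V : Type} (G : SimpleGraph V) (s t : V) (T : Set V) : Prop :=
  ∀ p q : G.Walk s t, p.IsPath → q.IsPath →
    trackSeq T p.support = trackSeq T q.support → p = q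

/-- Every vertex and every edge of `G` lies on some `s`-`t` path. -/
def Reduced {V : Type} (G : SimpleGraph V) (s t : V) : Prop :=
  (∀ v : V, ∃ p : G.Walk s t, p.IsPath ∧ v ∈ p.support) ∧
  (∀ e ∈ G.edgeSet, ∃ p : G.Walk s t, p.IsPath ∧ e ∈ p.edges)

/-- `S` is a feedback vertex set: every cycle of `G` meets `S`. -/
def IsFVS {V : Type} (G : SimpleGraph V) (S : Set V) : Prop :=
  ∀ (v : V) (c : G.Walk v v), c.IsCycle → ∃ x ∈ c.support, x ∈ S

/-- The neighbourhood of a set of vertices. -/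
def nbhd {V : Type} (G : SimpleGraph V) (S : Set V) : Set V :=
  {v | ∃ u ∈ S, G.Adj u v}

/-- Split a walk at the *first* vertex belonging to `S`. -/
lemma firstSplit {V : Type} {G : SimpleGraph V} (S : Set V) :
    ∀ {a b : V} (p : G.Walk a b), (∃ x ∈ p.support, x ∈ S) →
      ∃ (u : V) (p1 : G.Walk a u) (p2 : G.Walk u b),
        p = p1.append p2 ∧ u ∈ S ∧ ∀ x ∈ p1.support, x ∈ S → x = u := by
  intro a b p
  induction p with
  | nil =>
    intro h
    obtain ⟨x, hx, hxS⟩ := h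
    simp only [Walk.support_nil, List.mem_singleton] at hx
    subst hx
    exact ⟨x, Walk.nil, Walk.nil, by simp, hxS, by intro y hy _; simpa using hy⟩
  | @cons a c b adj q ih =>
    intro h
    by_cases ha : a ∈ S
    · exact ⟨a, Walk.nil, Walk.cons adj q, by simp, ha,
        by intro y hy _; simpa using hy⟩
    · have hq : ∃ x ∈ q.support, x ∈ S := by
        obtain ⟨x, hx, hxS⟩ := h
        simp only [Walk.support_cons, List.mem_cons] at hx
        rcases hx with rfl | hx
        · exact absurd hxS ha
        · exact ⟨x, hx, hxS⟩
      obtain ⟨u, p1, p2, hspec, huS, hp1⟩ := ih hq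
      refine ⟨u, Walk.cons adj p1, p2, by rw [Walk.cons_append, hspec], huS, ?_⟩
      intro y hy hyS
      simp only [Walk.support_cons, List.mem_cons] at hy
      rcases hy with rfl | hy
      · exact absurd hyS ha
      · exact hp1 y hy hyS

/-- Split a walk at the *last* vertex belonging to `S`. -/
lemma lastSplit {V : Type} {G : SimpleGraph V} (S : Set V) {a b : V}
    (p : G.Walk a b) (h : ∃ x ∈ p.support, x ∈ S) :
    ∃ (u : V) (p1 : G.Walk a u) (p2 : G.Walk u b),
      p = p1.append p2 ∧ u ∈ S ∧ ∀ x ∈ p2.support, x ∈ S → x = u := by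
  obtain ⟨u, q1, q2, hspec, huS, hq1⟩ := firstSplit S p.reverse
    (by obtain ⟨x, hx, hxS⟩ := h; exact ⟨x, by simpa [Walk.support_reverse] using hx, hxS⟩)
  refine ⟨u, q2.reverse, q1.reverse, ?_, huS, ?_⟩
  · have := congrArg Walk.reverse hspec
    simpa [Walk.reverse_append] using this
  · intro x hx hxS
    exact hq1 x (by simpa [Walk.support_reverse] using hx) hxS

/-- Combine `p1 : s → u`, an arc `A : u → w` through the cycle, and `p2 : w → t`
into a path, and compute its support. -/
lemma buildPath {V : Type} {G : SimpleGraph V} {s u w t : V} (Cs : Set V)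
    (p1 : G.Walk s u) (A : G.Walk u w) (p2 : G.Walk w t)
    (hp1 : p1.IsPath) (hA : A.IsPath) (hp2 : p2.IsPath) (huw : u ≠ w)
    (h1C : ∀ x ∈ p1.support, x ∈ Cs → x = u)
    (h2C : ∀ x ∈ p2.support, x ∈ Cs → x = w)
    (hAC : ∀ x ∈ A.support, x ∈ Cs)
    (h12 : ∀ x ∈ p1.support, x ∉ p2.support) :
    (p1.append (A.append p2)).IsPath ∧
    (p1.append (A.append p2)).support
      = p1.support ++ (A.support.tail ++ p2.support.tail) := by
  have hAu : A.support = u :: A.support.tail := A.support_eq_cons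
  have hp2w : p2.support = w :: p2.support.tail := p2.support_eq_cons
  have huA : u ∉ A.support.tail := by
    have := hA.support_nodup
    rw [hAu] at this
    exact (List.nodup_cons.mp this).1
  have hwp2 : w ∉ p2.support.tail := by
    have := hp2.support_nodup
    rw [hp2w] at this
    exact (List.nodup_cons.mp this).1
  have hsupp : (p1.append (A.append p2)).support
      = p1.support ++ (A.support.tail ++ p2.support.tail) := by
    rw [Walk.support_append, Walk.tail_support_append]
  refine ⟨Walk.IsPath.mk' ?_, hsupp⟩
  rw [hsupp, List.nodup_append]
  refine ⟨hp1.support_nodup, ?_, ?_⟩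
  · rw [List.nodup_append]
    refine ⟨(List.nodup_cons.mp (hAu ▸ hA.support_nodup)).2,
      (List.nodup_cons.mp (hp2w ▸ hp2.support_nodup)).2, ?_⟩
    intro x hx y hx2 hxy
    subst hxy
    have hxC : x ∈ Cs := hAC x (List.mem_of_mem_tail hx)
    have : x = w := h2C x (List.mem_of_mem_tail hx2) hxC
    subst this
    have : x ∈ A.support.tail := hx
    -- w is the last vertex of A, and w ≠ u, so this is fine; but w ∉ p2.support.tail
    exact hwp2 hx2
  · intro x hx y hx' hxy
    subst hxy
    rcases List.mem_append.mp hx' with hxA | hx2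
    · have hxC : x ∈ Cs := hAC x (List.mem_of_mem_tail hxA)
      have : x = u := h1C x hx hxC
      subst this
      exact huA hxA
    · exact h12 x hx (List.mem_of_mem_tail hx2)

lemma trackSeq_append {V : Type} (T : Set V) (l1 l2 : List V) :
    trackSeq T (l1 ++ l2) = trackSeq T l1 ++ trackSeq T l2 := by
  simp [trackSeq, List.filter_append]

lemma trackSeq_eq_nil {V : Type} (T : Set V) (l : List V)
    (h : ∀ x ∈ l, x ∉ T) : trackSeq T l = [] := by
  apply List.filter_eq_nil_iff.mpr
  intro a ha
  simpa using h a ha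

theorem stmt18 {V : Type} [Fintype V] (G : SimpleGraph V) (s t : V)
    (hred : ∀ e ∈ G.edgeSet, ∃ p : G.Walk s t, p.IsPath ∧ e ∈ p.edges)
    (T : Set V) (hT : IsTrackingSet G s t T) :
    IsFVS G T := by
  classical
  intro v c hc
  by_contra hT'
  push_neg at hT'
  cases c with
  | nil => exact absurd hc Walk.IsCycle.not_of_nil
  | @cons _ x0 _ adj q =>
  set c : G.Walk v v := Walk.cons adj q with hcdef
  set Cs : Set V := {x | x ∈ c.support} with hCs
  -- basic facts about the cycle
  have hvC : v ∈ Cs := c.start_mem_support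
  have hx0C : x0 ∈ Cs := by
    show x0 ∈ c.support
    rw [hcdef, Walk.support_cons]
    exact List.mem_cons_of_mem _ q.start_mem_support
  have hvx0 : v ≠ x0 := adj.ne
  -- tail membership: every vertex of c.support is in c.support.tail
  have htail : ∀ x, x ∈ Cs → x ∈ c.support.tail := by
    intro x hx
    have : c.support.tail = q.support := by rw [hcdef, Walk.support_cons]; rfl
    rw [this]
    have hx' : x ∈ c.support := hx
    rw [hcdef, Walk.support_cons] at hx'
    rcases List.mem_cons.mp hx' with rfl | hx'
    · exact q.end_mem_support
    · exact hx'
  -- path through the edge s(v, x0)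
  obtain ⟨p, hp, he⟩ := hred s(v, x0) adj
  have hvp : v ∈ p.support := p.fst_mem_support_of_mem_edges he
  have hx0p : x0 ∈ p.support := p.snd_mem_support_of_mem_edges he
  -- split p at the first cycle vertex
  obtain ⟨u, p1, pr, hpspec, huC, hp1C⟩ := firstSplit Cs p ⟨v, hvp, hvC⟩
  -- p1 and pr are paths
  have hpsupp : p.support = p1.support ++ pr.support.tail := by
    rw [hpspec, Walk.support_append]
  have hpnd := hp.support_nodup
  rw [hpsupp, List.nodup_append] at hpnd
  obtain ⟨hp1nd, hprtnd, hdisj1⟩ := hpnd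
  have hp1path : p1.IsPath := Walk.IsPath.mk' hp1nd
  have huprt : u ∉ pr.support.tail := fun h => hdisj1 _ p1.end_mem_support _ h rfl
  have hprpath : pr.IsPath := by
    apply Walk.IsPath.mk'
    rw [pr.support_eq_cons]
    exact List.nodup_cons.mpr ⟨huprt, hprtnd⟩
  -- split pr at the last cycle vertex
  obtain ⟨w, pm, p2, hprspec, hwC, hp2C⟩ := lastSplit Cs pr ⟨u, pr.start_mem_support, huC⟩
  have hprsupp : pr.support = pm.support ++ p2.support.tail := by
    rw [hprspec, Walk.support_append]
  have hprnd := hprpath.support_nodup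
  rw [hprsupp, List.nodup_append] at hprnd
  obtain ⟨hpmnd, hp2tnd, hdisjm⟩ := hprnd
  have hpmpath : pm.IsPath := Walk.IsPath.mk' hpmnd
  have hwp2t : w ∉ p2.support.tail := fun h => hdisjm _ pm.end_mem_support _ h rfl
  have hp2path : p2.IsPath := by
    apply Walk.IsPath.mk'
    rw [p2.support_eq_cons]
    exact List.nodup_cons.mpr ⟨hwp2t, hp2tnd⟩
  -- a cycle vertex of p different from u, lying in pr
  have hmem_pr : ∀ x, x ∈ Cs → x ∈ p.support → x ∈ pr.support := by
    intro x hxC hxp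
    rw [hpsupp] at hxp
    rcases List.mem_append.mp hxp with hx1 | hx2
    · have : x = u := hp1C x hx1 hxC
      subst this
      exact pr.start_mem_support
    · exact List.mem_of_mem_tail hx2
  obtain ⟨z, hzC, hzpr, hzu⟩ : ∃ z, z ∈ Cs ∧ z ∈ pr.support ∧ z ≠ u := by
    by_cases hu : v = u
    · exact ⟨x0, hx0C, hmem_pr x0 hx0C hx0p, fun h => hvx0 (hu.trans h.symm)⟩
    · exact ⟨v, hvC, hmem_pr v hvC hvp, hu⟩
  -- u ≠ w
  have huw : u ≠ w := by
    intro h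
    subst h
    have : pm = Walk.nil := Walk.isPath_iff_eq_nil.mp hpmpath
    rw [this, Walk.nil_append] at hprspec
    subst hprspec
    exact hzu (hp2C z hzpr hzC)
  -- u not in p2's support
  have hup2 : u ∉ p2.support := fun h => huw (hp2C u h huC)
  -- p1 and p2 are vertex-disjoint
  have h12 : ∀ x ∈ p1.support, x ∉ p2.support := by
    intro x hx1 hx2
    have hxpr : x ∈ pr.support := by
      rw [hprspec]
      exact (Walk.mem_support_append_iff _ _).mpr (Or.inr hx2)
    rw [pr.support_eq_cons] at hxpr
    rcases List.mem_cons.mp hxpr with rfl | hxprt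
    · exact hup2 hx2
    · exact hdisj1 _ hx1 _ hxprt rfl
  -- rotate the cycle at u
  have huCs : u ∈ c.support := huC
  set c' : G.Walk u u := c.rotate u huCs with hc'def
  have hc' : c'.IsCycle := hc.rotate huCs
  have hperm := c.support_rotate u huCs
  have hc'sub : ∀ x, x ∈ c'.support → x ∈ Cs := by
    intro x hx
    rw [c'.support_eq_cons] at hx
    rcases List.mem_cons.mp hx with rfl | hx
    · exact huC
    · exact List.mem_of_mem_tail (hperm.mem_iff.mp hx)
  have hwc' : w ∈ c'.support := by
    rw [c'.support_eq_cons]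
    exact List.mem_cons_of_mem _ (hperm.mem_iff.mpr (htail w hwC))
  -- split the rotated cycle into two arcs
  set A1 : G.Walk u w := c'.takeUntil w hwc' with hA1def
  set dw : G.Walk w u := c'.dropUntil w hwc' with hdwdef
  have hcsplit : c' = A1.append dw := (c'.take_spec hwc').symm
  have hc'supp : c'.support = u :: (A1.support.tail ++ dw.support.tail) := by
    rw [hcsplit, Walk.support_append, A1.support_eq_cons]
    rfl
  have hc'tnd : c'.support.tail.Nodup := hc'.support_nodup
  have htailnd : (A1.support.tail ++ dw.support.tail).Nodup := by
    rw [hc'supp] at hc'tnd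
    exact hc'tnd
  rw [List.nodup_append] at htailnd
  obtain ⟨hA1tnd, hdwtnd, hdisjA⟩ := htailnd
  -- arcs are paths
  have hwA1t : w ∈ A1.support.tail := by
    have := A1.end_mem_support
    rw [A1.support_eq_cons] at this
    rcases List.mem_cons.mp this with h | h
    · exact absurd h.symm huw
    · exact h
  have hudwt : u ∈ dw.support.tail := by
    have := dw.end_mem_support
    rw [dw.support_eq_cons] at this
    rcases List.mem_cons.mp this with h | h
    · exact absurd h huw
    · exact h
  have hA1path : A1.IsPath := by
    apply Walk.IsPath.mk'
    rw [A1.support_eq_cons]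
    exact List.nodup_cons.mpr ⟨fun h => hdisjA _ h _ hudwt rfl, hA1tnd⟩
  have hdwpath : dw.IsPath := by
    apply Walk.IsPath.mk'
    rw [dw.support_eq_cons]
    exact List.nodup_cons.mpr ⟨fun h => hdisjA _ hwA1t _ h rfl, hdwtnd⟩
  set A2 : G.Walk u w := dw.reverse with hA2def
  have hA2path : A2.IsPath := hdwpath.reverse
  have hA1sub : ∀ x ∈ A1.support, x ∈ Cs := fun x hx =>
    hc'sub x (c'.support_takeUntil_subset hwc' hx)
  have hA2sub : ∀ x ∈ A2.support, x ∈ Cs := by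
    intro x hx
    rw [hA2def, Walk.support_reverse, List.mem_reverse] at hx
    exact hc'sub x (c'.support_dropUntil_subset hwc' hx)
  -- build the two s-t paths
  obtain ⟨hq1path, hq1supp⟩ := buildPath Cs p1 A1 p2 hp1path hA1path hp2path huw hp1C hp2C hA1sub h12
  obtain ⟨hq2path, hq2supp⟩ := buildPath Cs p1 A2 p2 hp1path hA2path hp2path huw hp1C hp2C hA2sub h12
  -- equal track sequences
  have hCT : ∀ x, x ∈ Cs → x ∉ T := fun x hx => hT' x hx
  have htrack : ∀ (A : G.Walk u w), (∀ x ∈ A.support, x ∈ Cs) →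
      trackSeq T (p1.append (A.append p2)).support
        = trackSeq T p1.support ++ trackSeq T p2.support.tail := by
    intro A hAsub
    have hsupp : (p1.append (A.append p2)).support
        = p1.support ++ (A.support.tail ++ p2.support.tail) := by
      rw [Walk.support_append, Walk.tail_support_append]
    rw [hsupp, trackSeq_append, trackSeq_append,
      trackSeq_eq_nil T A.support.tail
        (fun x hx => hCT x (hAsub x (List.mem_of_mem_tail hx)))]
    simp
  have heq : p1.append (A1.append p2) = p1.append (A2.append p2) :=
    hT _ _ hq1path hq2path (by rw [htrack A1 hA1sub, htrack A2 hA2sub])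
  -- derive that the two arcs have the same support
  have hsuppeq : A1.support = A2.support := by
    have h := congrArg Walk.support heq
    rw [hq1supp, hq2supp] at h
    have h' := List.append_cancel_left h
    have h'' : A1.support.tail = A2.support.tail := List.append_cancel_right h'
    rw [A1.support_eq_cons, A2.support_eq_cons, h'']
  -- hence the cycle has at most two vertices: contradiction
  have hA1uw : ∀ x ∈ A1.support, x = u ∨ x = w := by
    intro x hx
    have hx2 : x ∈ dw.support := by
      have := hsuppeq ▸ hx
      rw [hA2def, Walk.support_reverse, List.mem_reverse] at this
      exact this
    rw [A1.support_eq_cons] at hx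
    rw [dw.support_eq_cons] at hx2
    rcases List.mem_cons.mp hx with rfl | hx
    · exact Or.inl rfl
    · rcases List.mem_cons.mp hx2 with rfl | hx2
      · exact Or.inr rfl
      · exact absurd rfl (hdisjA _ hx _ hx2)
  have hc'uw : ∀ x ∈ c'.support.tail, x = u ∨ x = w := by
    intro x hx
    rw [hc'supp] at hx
    rcases List.mem_append.mp hx with hx | hx
    · exact hA1uw x (List.mem_of_mem_tail hx)
    · have : x ∈ A2.support := by
        rw [hA2def, Walk.support_reverse, List.mem_reverse]
        exact List.mem_of_mem_tail hx
      exact hA1uw x (hsuppeq ▸ this)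
  -- counting
  have hlen : c'.support.tail.length = c'.length := by
    have h1 := c'.length_support
    have h2 : c'.support.tail.length = c'.support.length - 1 := List.length_tail
    omega
  have h3 : 3 ≤ c'.length := hc'.three_le_length
  have hsubF : c'.support.tail.toFinset ⊆ ({u, w} : Finset V) := by
    intro x hx
    rw [List.mem_toFinset] at hx
    rcases hc'uw x hx with rfl | rfl <;> simp
  have hcard : c'.support.tail.toFinset.card = c'.support.tail.length :=
    List.toFinset_card_of_nodup hc'.support_nodup
  have : c'.support.tail.toFinset.card ≤ 2 := by
    calc c'.support.tail.toFinset.card ≤ ({u, w} : Finset V).card := Finset.card_le_card hsubF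
    _ ≤ 2 := Finset.card_insert_le u {w} |>.trans (by simp)
  omega
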